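/- Let D : ℝ^p ⇉ ℝ^p be locally bounded, nonempty-valued with closed graph, and let (M_i)_{i∈ℕ} be measurable selections of D such that D(x) equals the closure of {M_i(x) : i ∈ ℕ} for every x. Suppose f : ℝ^p → ℝ is such that for every i and every absolutely continuous γ : [0,1] → ℝ^p, f(γ(t)) - f(γ(0)) = ∫₀ᵗ ⟨M_i(γ(s)), γ'(s)⟩ ds for all t ∈ [0,1]. Then D is a conservative gradient for f. -/

import Mathlib

open MeasureTheory Set Filter
open scoped Topology

lemma key_bound {g : ℝ → ℝ} (hg : Integrable g volume) {a b : ℝ} (c : ℝ) (hab : a < b) :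
    ‖(∫ s in a..b, g s) - (b - a) * g c‖ ≤ (b - a) * ⨍ z in Icc a b, ‖g z - g c‖ := by
  have hv : volume.real (Icc a b) = b - a := by
    rw [measureReal_def, Real.volume_Icc, ENNReal.toReal_ofReal (by linarith)]
  have h1 : (∫ s in a..b, g s) = ∫ s in Icc a b, g s := by
    rw [intervalIntegral.integral_of_le hab.le, ← integral_Icc_eq_integral_Ioc]
  have h2 : (b - a) * g c = ∫ _ in Icc a b, g c := by
    rw [setIntegral_const, smul_eq_mul, hv]
  have hgi : IntegrableOn g (Icc a b) := hg.integrableOn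
  have hci : IntegrableOn (fun _ : ℝ => g c) (Icc a b) := integrableOn_const (by
    rw [Real.volume_Icc]; exact ENNReal.ofReal_ne_top)
  rw [h1, h2, ← integral_sub hgi hci]
  calc ‖∫ z in Icc a b, (g z - g c)‖ ≤ ∫ z in Icc a b, ‖g z - g c‖ :=
        norm_integral_le_integral_norm _
    _ = (b - a) * ⨍ z in Icc a b, ‖g z - g c‖ := by
        rw [setAverage_eq, hv, smul_eq_mul, ← mul_assoc, mul_inv_cancel₀ (by linarith), one_mul]

lemma ae_ftc {g : ℝ → ℝ} (hg : Integrable g volume) :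
    ∀ᵐ x : ℝ, HasDerivAt (fun u => ∫ s in (0:ℝ)..u, g s) (g x) x := by
  filter_upwards [(IsUnifLocDoublingMeasure.vitaliFamily (volume : Measure ℝ)
      1).ae_tendsto_average_norm_sub hg.locallyIntegrable] with x hx
  set F := fun u => ∫ s in (0:ℝ)..u, g s with hF
  have hdiff : ∀ u : ℝ, F u - F x = ∫ s in x..u, g s := fun u => by
    rw [hF]; exact intervalIntegral.integral_interval_sub_left hg.intervalIntegrable
      hg.intervalIntegrable
  rw [hasDerivAt_iff_tendsto_slope, ← nhdsLT_sup_nhdsGT, tendsto_sup]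
  constructor
  · -- left limit
    have B := hx.comp (Real.tendsto_Icc_vitaliFamily_left x)
    rw [tendsto_iff_dist_tendsto_zero]
    apply squeeze_zero' (Eventually.of_forall fun u => dist_nonneg)
    · filter_upwards [self_mem_nhdsWithin] with u (hu : u < x)
      have hb := key_bound hg x hu
      have hne : x - u ≠ 0 := by linarith
      have hd : slope F x u - g x = ((∫ s in u..x, g s) - (x - u) * g x) / (x - u) := by
        rw [slope_def_field]
        have h3 : F u - F x = -(∫ s in u..x, g s) := by
          rw [hdiff u, intervalIntegral.integral_symm]
        rw [h3, show u - x = -(x - u) by ring, neg_div_neg_eq, sub_div]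
        congr 1
        field_simp
      rw [Real.dist_eq, hd, abs_div, abs_of_pos (by linarith : (0:ℝ) < x - u),
        div_le_iff₀ (by linarith : (0:ℝ) < x - u)]
      calc |(∫ s in u..x, g s) - (x - u) * g x| ≤ (x - u) * ⨍ z in Icc u x, ‖g z - g x‖ := hb
        _ = (⨍ z in Icc u x, ‖g z - g x‖) * (x - u) := mul_comm _ _
    · exact B
  · -- right limit
    have B := hx.comp (Real.tendsto_Icc_vitaliFamily_right x)
    rw [tendsto_iff_dist_tendsto_zero]
    apply squeeze_zero' (Eventually.of_forall fun u => dist_nonneg)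
    · filter_upwards [self_mem_nhdsWithin] with u (hu : x < u)
      have hne : u - x ≠ 0 := by linarith
      have hb := key_bound hg x hu
      have hd : slope F x u - g x = ((∫ s in x..u, g s) - (u - x) * g x) / (u - x) := by
        rw [slope_def_field, hdiff u, sub_div]
        congr 1
        field_simp
      rw [Real.dist_eq, hd, abs_div, abs_of_pos (by linarith : (0:ℝ) < u - x),
        div_le_iff₀ (by linarith : (0:ℝ) < u - x)]
      calc |(∫ s in x..u, g s) - (u - x) * g x| ≤ (u - x) * ⨍ z in Icc x u, ‖g z - g x‖ := hb
        _ = (⨍ z in Icc x u, ‖g z - g x‖) * (u - x) := mul_comm _ _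
    · exact B

lemma bound_on_compact {p : ℕ} {D : (Fin p → ℝ) → Set (Fin p → ℝ)}
    (hlb : ∀ x : Fin p → ℝ, ∃ ε > (0 : ℝ), ∃ C : ℝ,
      ∀ y, dist y x < ε → ∀ V ∈ D y, ‖V‖ ≤ C)
    {K : Set (Fin p → ℝ)} (hK : IsCompact K) :
    ∃ C, ∀ y ∈ K, ∀ V ∈ D y, ‖V‖ ≤ C := by
  have hlb' : ∀ x : Fin p → ℝ, ∃ εC : ℝ × ℝ, 0 < εC.1 ∧
      ∀ y, dist y x < εC.1 → ∀ V ∈ D y, ‖V‖ ≤ εC.2 := by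
    intro x
    obtain ⟨ε, hε, C, hC⟩ := hlb x
    exact ⟨⟨ε, C⟩, hε, hC⟩
  choose εC hpos hb using hlb'
  obtain ⟨t, ht⟩ := hK.elim_finite_subcover (fun x => Metric.ball x (εC x).1)
    (fun x => Metric.isOpen_ball)
    (fun y hy => mem_iUnion.2 ⟨y, Metric.mem_ball_self (hpos y)⟩)
  obtain ⟨C₀, hC₀⟩ := (t.image (fun x => (εC x).2)).exists_le
  refine ⟨C₀, fun y hy V hV => ?_⟩
  obtain ⟨x, hxt, hyx⟩ := mem_iUnion₂.1 (ht hy)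
  exact (hb x y hyx V hV).trans (hC₀ _ (Finset.mem_image_of_mem _ hxt))

/-- `D` is a conservative gradient for `f : ℝ^p → ℝ`: nonempty-valued, locally
bounded, closed graph, and along every absolutely continuous curve `γ : [0,1] → ℝ^p`,
for almost every `t`, `(f ∘ γ)'(t) = ⟨V, γ'(t)⟩` for all `V ∈ D(γ(t))`. -/
def IsConservativeGradient {p : ℕ}
    (D : (Fin p → ℝ) → Set (Fin p → ℝ)) (f : (Fin p → ℝ) → ℝ) : Prop :=
  (∀ x, (D x).Nonempty) ∧
  (∀ x : Fin p → ℝ, ∃ ε > (0 : ℝ), ∃ C : ℝ,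
    ∀ y, dist y x < ε → ∀ V ∈ D y, ‖V‖ ≤ C) ∧
  IsClosed {q : (Fin p → ℝ) × (Fin p → ℝ) | q.2 ∈ D q.1} ∧
  (∀ γ γ' : ℝ → (Fin p → ℝ),
    IntegrableOn γ' (Icc (0 : ℝ) 1) →
    (∀ t ∈ Icc (0 : ℝ) 1, γ t - γ 0 = ∫ s in (0 : ℝ)..t, γ' s) →
    ∀ᵐ t ∂(volume.restrict (Icc (0 : ℝ) 1)),
      ∀ V ∈ D (γ t), HasDerivAt (fun s => f (γ s)) (dotProduct V (γ' t)) t)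

/-- Measurable selections and density: if `D` is locally bounded, nonempty-valued,
with closed graph, `(Mᵢ)` are measurable selections of `D` which are pointwise dense
in `D`, and the fundamental theorem of calculus identity
`f(γ(t)) - f(γ(0)) = ∫₀ᵗ ⟨Mᵢ(γ(s)), γ'(s)⟩ ds` holds along every absolutely
continuous curve `γ` for every `i`, then `D` is a conservative gradient for `f`. -/
theorem dense_selections_conservative {p : ℕ}
    (D : (Fin p → ℝ) → Set (Fin p → ℝ)) (f : (Fin p → ℝ) → ℝ)
    (M : ℕ → (Fin p → ℝ) → (Fin p → ℝ))
    (hne : ∀ x, (D x).Nonempty)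
    (hlb : ∀ x : Fin p → ℝ, ∃ ε > (0 : ℝ), ∃ C : ℝ,
      ∀ y, dist y x < ε → ∀ V ∈ D y, ‖V‖ ≤ C)
    (hclosed : IsClosed {q : (Fin p → ℝ) × (Fin p → ℝ) | q.2 ∈ D q.1})
    (hMmeas : ∀ i, Measurable (M i))
    (hMsel : ∀ i x, M i x ∈ D x)
    (hMdense : ∀ x, D x = closure {v | ∃ i, M i x = v})
    (hint : ∀ i, ∀ γ γ' : ℝ → (Fin p → ℝ),
      IntegrableOn γ' (Icc (0 : ℝ) 1) →
      (∀ t ∈ Icc (0 : ℝ) 1, γ t - γ 0 = ∫ s in (0 : ℝ)..t, γ' s) →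
      ∀ t ∈ Icc (0 : ℝ) 1,
        f (γ t) - f (γ 0) = ∫ s in (0 : ℝ)..t, dotProduct (M i (γ s)) (γ' s)) :
    IsConservativeGradient D f := by
  refine ⟨hne, hlb, hclosed, ?_⟩
  intro γ γ' hγ' hftc
  -- continuity of γ on [0,1]
  have hγcont : ContinuousOn γ (Icc (0:ℝ) 1) := by
    have hc : ContinuousOn (fun t => γ 0 + ∫ s in Ioc (0:ℝ) t, γ' s) (Icc (0:ℝ) 1) :=
      continuousOn_const.add (intervalIntegral.continuousOn_primitive hγ')
    refine ContinuousOn.congr hc fun t ht => ?_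
    have h1 := hftc t ht
    rw [intervalIntegral.integral_of_le ht.1] at h1
    rw [← h1]; abel
  have hK : IsCompact (γ '' Icc (0:ℝ) 1) := isCompact_Icc.image_of_continuousOn hγcont
  obtain ⟨C, hC⟩ := bound_on_compact hlb hK
  have hCbd : ∀ s ∈ Icc (0:ℝ) 1, ∀ V ∈ D (γ s), ‖V‖ ≤ C := fun s hs V hV =>
    hC (γ s) (mem_image_of_mem γ hs) V hV
  have hγae : AEMeasurable γ (volume.restrict (Icc (0:ℝ) 1)) :=
    hγcont.aemeasurable measurableSet_Icc
  have hγ'ae : AEMeasurable γ' (volume.restrict (Icc (0:ℝ) 1)) :=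
    hγ'.aemeasurable
  set g : ℕ → ℝ → ℝ := fun i s => dotProduct (M i (γ s)) (γ' s) with hg
  -- measurability of g i
  have hgmeas : ∀ i, AEMeasurable (g i) (volume.restrict (Icc (0:ℝ) 1)) := by
    intro i
    have hφ : AEMeasurable (fun s => M i (γ s)) (volume.restrict (Icc (0:ℝ) 1)) :=
      (hMmeas i).comp_aemeasurable hγae
    have : ∀ j : Fin p, AEMeasurable (fun s => M i (γ s) j * γ' s j)
        (volume.restrict (Icc (0:ℝ) 1)) := fun j =>
      ((measurable_pi_apply j).comp_aemeasurable hφ).mul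
        ((measurable_pi_apply j).comp_aemeasurable hγ'ae)
    have hsum := Finset.aemeasurable_fun_sum (μ := volume.restrict (Icc (0:ℝ) 1))
      Finset.univ (fun j _ => this j)
    refine hsum.congr (Eventually.of_forall fun s => ?_)
    simp [hg, dotProduct]
  -- bound on g i
  have hgbd : ∀ i, ∀ s ∈ Icc (0:ℝ) 1, ‖g i s‖ ≤ (p * max C 0) * ‖γ' s‖ := by
    intro i s hs
    have hM : ‖M i (γ s)‖ ≤ max C 0 :=
      le_trans (hCbd s hs _ (hMsel i (γ s))) (le_max_left _ _)
    have h1 : ∀ j : Fin p, |M i (γ s) j * γ' s j| ≤ (max C 0) * ‖γ' s‖ := by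
      intro j
      rw [abs_mul]
      have e1 : |M i (γ s) j| ≤ max C 0 := le_trans (norm_le_pi_norm (M i (γ s)) j) hM
      have e2 : |γ' s j| ≤ ‖γ' s‖ := norm_le_pi_norm (γ' s) j
      exact mul_le_mul e1 e2 (abs_nonneg _) (le_max_right _ _)
    calc ‖g i s‖ = |∑ j, M i (γ s) j * γ' s j| := by simp [hg, dotProduct]
      _ ≤ ∑ j, |M i (γ s) j * γ' s j| := Finset.abs_sum_le_sum_abs _ _
      _ ≤ ∑ _j : Fin p, (max C 0) * ‖γ' s‖ := Finset.sum_le_sum (fun j _ => h1 j)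
      _ = (p * max C 0) * ‖γ' s‖ := by
          simp [Finset.sum_const, Finset.card_univ]; ring
  have hgint : ∀ i, IntegrableOn (g i) (Icc (0:ℝ) 1) := by
    intro i
    refine Integrable.mono' (hγ'.norm.const_mul (p * max C 0))
      (hgmeas i).aestronglyMeasurable ?_
    filter_upwards [ae_restrict_mem measurableSet_Icc] with s hs
    exact hgbd i s hs
  set gh : ℕ → ℝ → ℝ := fun i => (Icc (0:ℝ) 1).indicator (g i) with hgh
  have hghint : ∀ i, Integrable (gh i) volume := fun i =>
    (integrable_indicator_iff measurableSet_Icc).2 (hgint i)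
  -- FTC identity with extended integrand
  have hFeq : ∀ i, ∀ t ∈ Icc (0:ℝ) 1,
      f (γ t) = f (γ 0) + ∫ s in (0:ℝ)..t, gh i s := by
    intro i t ht
    have h1 := hint i γ γ' hγ' hftc t ht
    have h2 : (∫ s in (0:ℝ)..t, gh i s) = ∫ s in (0:ℝ)..t, g i s := by
      refine intervalIntegral.integral_congr fun s hs => ?_
      rw [uIcc_of_le ht.1] at hs
      exact indicator_of_mem (Icc_subset_Icc le_rfl ht.2 hs) _
    rw [h2, ← h1]; ring
  have hae : ∀ i, ∀ᵐ t : ℝ, HasDerivAt (fun u => ∫ s in (0:ℝ)..u, gh i s) (gh i t) t :=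
    fun i => ae_ftc (hghint i)
  have h01 : ∀ᵐ t : ℝ, t ∉ ({0, 1} : Set ℝ) :=
    measure_eq_zero_iff_ae_notMem.1 ((Set.toFinite ({0, 1} : Set ℝ)).measure_zero volume)
  filter_upwards [ae_restrict_mem measurableSet_Icc,
    ae_mono Measure.restrict_le_self (ae_all_iff.2 hae),
    ae_mono Measure.restrict_le_self h01] with t ht hder hne01
  have htO : t ∈ Ioo (0:ℝ) 1 := by
    simp only [mem_insert_iff, mem_singleton_iff, not_or] at hne01
    exact ⟨lt_of_le_of_ne ht.1 (Ne.symm hne01.1), lt_of_le_of_ne ht.2 hne01.2⟩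
  have hfd : ∀ i, HasDerivAt (fun u => f (γ u)) (g i t) t := by
    intro i
    have h1 : HasDerivAt (fun u => f (γ 0) + ∫ s in (0:ℝ)..u, gh i s) (gh i t) t :=
      (hder i).const_add _
    have h2 : (fun u => f (γ u)) =ᶠ[𝓝 t]
        (fun u => f (γ 0) + ∫ s in (0:ℝ)..u, gh i s) := by
      filter_upwards [Ioo_mem_nhds htO.1 htO.2] with u hu
      exact hFeq i u (Ioo_subset_Icc_self hu)
    have h3 := h1.congr_of_eventuallyEq h2
    rwa [show gh i t = g i t from indicator_of_mem ht _] at h3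
  intro V hV
  have hVc : dotProduct V (γ' t) = g 0 t := by
    have hcl : IsClosed {v : Fin p → ℝ | dotProduct v (γ' t) = g 0 t} := by
      refine isClosed_eq ?_ continuous_const
      exact continuous_finset_sum _ fun j _ => (continuous_apply j).mul continuous_const
    have hsub : {v | ∃ i, M i (γ t) = v} ⊆
        {v : Fin p → ℝ | dotProduct v (γ' t) = g 0 t} := by
      rintro v ⟨i, rfl⟩
      exact (hfd i).unique (hfd 0)
    have hV' : V ∈ closure {v | ∃ i, M i (γ t) = v} := by
      rw [← hMdense (γ t)]; exact hV
    exact closure_minimal hsub hcl hV'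
  rw [hVc]
  exact hfd 0
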